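/- If A and B are finite-dimensional K-algebras which are Morita equivalent and A is a symmetric algebra, then B is a symmetric algebra. -/

import Mathlib

/-- A finite-dimensional `K`-algebra is symmetric if it admits a symmetrizing form:
a `K`-linear trace form `τ` with `τ(ab) = τ(ba)` whose associated bilinear form
`(a,b) ↦ τ(ab)` is non-degenerate. -/
def IsSymmetricAlgebraOfForm (K A : Type) [Field K] [Ring A] [Algebra K A] : Prop :=
  ∃ τ : A →ₗ[K] K, (∀ a b : A, τ (a * b) = τ (b * a)) ∧
    ∀ a : A, (∀ b : A, τ (a * b) = 0) → a = 0

/-- If two finite-dimensional `K`-algebras `A`, `B` are Morita equivalent (expressed by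
`B^{op} ≅ e·M_k(A)·e` for a full idempotent `e` of a matrix algebra over `A`) and `A` is
a symmetric algebra, then `B` is a symmetric algebra. -/
theorem symmetric_of_moritaEquivalent
    (K A B : Type) [Field K] [Ring A] [Ring B] [Algebra K A] [Algebra K B]
    [FiniteDimensional K A] [FiniteDimensional K B]
    (hM : ∃ (k : ℕ) (e : Matrix (Fin k) (Fin k) A) (f : B →ₗ[K] Matrix (Fin k) (Fin k) A),
      e * e = e ∧
      (∃ (s : ℕ) (a b : Fin s → Matrix (Fin k) (Fin k) A), ∑ i, a i * e * b i = 1) ∧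
      f 1 = e ∧ (∀ x y : B, f (x * y) = f y * f x) ∧ Function.Injective f ∧
      Set.range f = {z | e * z * e = z})
    (hA : IsSymmetricAlgebraOfForm K A) : IsSymmetricAlgebraOfForm K B := by
  obtain ⟨k, e, f, he, -, -, hmul, hinj, hrange⟩ := hM
  obtain ⟨τ, hτs, hτn⟩ := hA
  -- the matrix trace form
  set T : Matrix (Fin k) (Fin k) A →ₗ[K] K :=
    τ.comp (Matrix.traceLinearMap (Fin k) K A) with hT
  have hTval : ∀ M : Matrix (Fin k) (Fin k) A, T M = ∑ i, τ (M i i) := by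
    intro M
    simp [hT, Matrix.trace, Matrix.diag, map_sum]
  have hTcomm : ∀ M N : Matrix (Fin k) (Fin k) A, T (M * N) = T (N * M) := by
    intro M N
    rw [hTval, hTval]
    simp only [Matrix.mul_apply, map_sum]
    rw [Finset.sum_comm]
    exact Finset.sum_congr rfl fun i _ => Finset.sum_congr rfl fun j _ => hτs _ _
  have hTnd : ∀ z : Matrix (Fin k) (Fin k) A,
      (∀ m : Matrix (Fin k) (Fin k) A, T (m * z) = 0) → z = 0 := by
    intro z hz
    ext i j
    have key : ∀ a : A, τ (a * z i j) = 0 := by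
      intro a
      have := hz (Matrix.single j i a)
      rw [hTval] at this
      have hsum : ∀ p : Fin k, (Matrix.single j i a * z) p p
          = if p = j then a * z i p else 0 := by
        intro p
        simp [Matrix.mul_apply, Matrix.single, Finset.sum_ite_eq,
          ite_and, eq_comm]
      simp only [hsum, apply_ite τ, map_zero, Finset.sum_ite_eq',
        Finset.mem_univ, if_true] at this
      exact this
    apply hτn
    intro b
    rw [hτs]
    exact key b
  refine ⟨T.comp f, fun x y => ?_, fun x hx => ?_⟩
  · simp only [LinearMap.comp_apply, hmul]
    exact hTcomm _ _
  · have hz : e * f x * e = f x := by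
      have : f x ∈ {z | e * z * e = z} := hrange ▸ Set.mem_range_self x
      exact this
    apply hinj
    rw [map_zero]
    apply hTnd
    intro m
    have hm : e * m * e ∈ Set.range f := by
      rw [hrange]
      show e * (e * m * e) * e = e * m * e
      rw [← mul_assoc, ← mul_assoc, he, mul_assoc, he]
    obtain ⟨b, hb⟩ := hm
    have := hx b
    simp only [LinearMap.comp_apply, hmul, hb] at this
    have step : T (m * f x) = T (e * m * e * f x) := by
      conv_lhs => rw [← hz]
      rw [← mul_assoc, hTcomm (m * (e * f x)) e, ← mul_assoc, ← mul_assoc]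
    rw [step]
    exact this
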